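/- Let Y₁ and Y₂ be real-valued random variables with Y₁ > 0 and Y₂ > 0 almost surely, let b > 0, set R = Y₂ / Y₁^b and Z = (log Y₁, log Y₂), and let p ∈ (0,1). Then the directional quantile envelope D(p) of Z is contained in the closed half-plane {(z₁,z₂) ∈ ℝ² : z₂ ≥ b·z₁ + log Q_R(p)}; that is, the line z₂ = log Q_R(p) + b·z₁ (the first tangent line of Proposition 1) bounds D(p) from below. -/

import Mathlib

open MeasureTheory Real
open scoped ENNReal RealInnerProductSpace Pointwise

/-- The quantile function `Q_X(p) = inf {x : P(X ≤ x) ≥ p}`. -/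
noncomputable def quantileFn {Ω : Type*} [MeasurableSpace Ω] (μ : Measure Ω)
    (X : Ω → ℝ) (p : ℝ) : ℝ :=
  sInf {x : ℝ | ENNReal.ofReal p ≤ μ {ω | X ω ≤ x}}

/-- The `p`-th directional quantile envelope of a random vector `W` with values in `ℝ^K`:
the intersection over unit directions `d` of the half-spaces
`{w : ⟨d, w⟩ ≥ Q_{⟨d,W⟩}(p)}`. -/
noncomputable def dqe {Ω : Type*} [MeasurableSpace Ω] (μ : Measure Ω) {K : ℕ}
    (W : Ω → EuclideanSpace ℝ (Fin K)) (p : ℝ) : Set (EuclideanSpace ℝ (Fin K)) :=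
  ⋂ (d : EuclideanSpace ℝ (Fin K)) (_ : ‖d‖ = 1),
    {w : EuclideanSpace ℝ (Fin K) | quantileFn μ (fun ω => (inner ℝ d (W ω) : ℝ)) p ≤ (inner ℝ d w : ℝ)}

/-- quantileFn respects a.e. equality. -/
lemma quantileFn_congr {Ω : Type*} [MeasurableSpace Ω] {μ : Measure Ω} {X X' : Ω → ℝ}
    (h : X =ᵐ[μ] X') (p : ℝ) : quantileFn μ X p = quantileFn μ X' p := by
  unfold quantileFn
  congr 1
  ext x
  have : μ {ω | X ω ≤ x} = μ {ω | X' ω ≤ x} := by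
    apply measure_congr
    filter_upwards [h] with ω hω
    change (X ω ≤ x) = (X' ω ≤ x)
    rw [hω]
  simp [Set.mem_setOf_eq, this]

/-- quantileFn scales under division by a positive constant. -/
lemma quantileFn_div {Ω : Type*} [MeasurableSpace Ω] (μ : Measure Ω) (X : Ω → ℝ)
    {c : ℝ} (hc : 0 < c) (p : ℝ) :
    quantileFn μ (fun ω => X ω / c) p = quantileFn μ X p / c := by
  unfold quantileFn
  have hset : {x : ℝ | ENNReal.ofReal p ≤ μ {ω | X ω / c ≤ x}}
      = c⁻¹ • {y : ℝ | ENNReal.ofReal p ≤ μ {ω | X ω ≤ y}} := by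
    ext x
    rw [Set.mem_smul_set_iff_inv_smul_mem₀ (inv_ne_zero hc.ne')]
    have : {ω | X ω / c ≤ x} = {ω | X ω ≤ c * x} := by
      ext ω
      rw [Set.mem_setOf_eq, Set.mem_setOf_eq, div_le_iff₀ hc, mul_comm]
    simp only [this, Set.mem_setOf_eq, inv_inv, smul_eq_mul]
  rw [hset, Real.sInf_smul_of_nonneg (inv_nonneg.2 hc.le), smul_eq_mul, inv_mul_eq_div]

/-- log of quantile:  `Q_{log R}(p) = log Q_R(p)` for a.s. positive R. -/
lemma quantileFn_log {Ω : Type*} [MeasurableSpace Ω] (μ : Measure Ω) [IsProbabilityMeasure μ]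
    {R : Ω → ℝ} (hR : ∀ᵐ ω ∂μ, 0 < R ω) {p : ℝ} (hp : p ∈ Set.Ioo (0 : ℝ) 1) :
    quantileFn μ (fun ω => Real.log (R ω)) p = Real.log (quantileFn μ R p) := by
  obtain ⟨hp0, hp1⟩ := hp
  set S : Set ℝ := {y : ℝ | ENNReal.ofReal p ≤ μ {ω | R ω ≤ y}} with hS
  set T : Set ℝ := {x : ℝ | ENNReal.ofReal p ≤ μ {ω | Real.log (R ω) ≤ x}} with hT
  -- T is the preimage of S under exp
  have hTS : ∀ x : ℝ, x ∈ T ↔ Real.exp x ∈ S := by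
    intro x
    have : μ {ω | Real.log (R ω) ≤ x} = μ {ω | R ω ≤ Real.exp x} := by
      apply measure_congr
      filter_upwards [hR] with ω hω
      simp only [Set.mem_setOf_eq, eq_iff_iff]
      exact Real.log_le_iff_le_exp hω
    simp [hT, hS, Set.mem_setOf_eq, this]
  -- every element of S is positive
  have hSpos : ∀ y ∈ S, 0 < y := by
    intro y hy
    by_contra hle
    push_neg at hle
    have hcompl : μ {ω | ¬ 0 < R ω} = 0 := hR
    have hnull : μ {ω | R ω ≤ y} = 0 := by
      refine measure_mono_null (fun ω hω => ?_) hcompl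
      simp only [Set.mem_setOf_eq] at *
      intro h0
      exact absurd (le_trans hω hle) (not_le.2 h0)
    rw [hS, Set.mem_setOf_eq, hnull, nonpos_iff_eq_zero, ENNReal.ofReal_eq_zero] at hy
    exact absurd hy (not_le.2 hp0)
  -- S is an upper set
  have hSupper : ∀ y ∈ S, ∀ y', y ≤ y' → y' ∈ S := by
    intro y hy y' hyy'
    exact le_trans hy (measure_mono fun ω hω => le_trans hω hyy')
  -- S is nonempty
  have hSne : S.Nonempty := by
    have hunion : (⋃ n : ℕ, {ω | R ω ≤ (n : ℝ)}) = Set.univ := by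
      ext ω
      simp only [Set.mem_iUnion, Set.mem_setOf_eq, Set.mem_univ, iff_true]
      exact ⟨⌈R ω⌉₊, Nat.le_ceil _⟩
    have hsup : (⨆ n : ℕ, μ {ω | R ω ≤ (n : ℝ)}) = 1 := by
      rw [← Directed.measure_iUnion, hunion, measure_univ]
      refine Monotone.directed_le fun m n hmn ω hω => ?_
      simp only [Set.mem_setOf_eq] at *
      exact le_trans hω (Nat.cast_le.mpr hmn)
    have hlt : ENNReal.ofReal p < ⨆ n : ℕ, μ {ω | R ω ≤ (n : ℝ)} := by
      rw [hsup]; exact ENNReal.ofReal_lt_one.2 hp1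
    obtain ⟨n, hn⟩ := lt_iSup_iff.1 hlt
    exact ⟨(n : ℝ), hn.le⟩
  have hSbdd : BddBelow S := ⟨0, fun y hy => (hSpos y hy).le⟩
  have hQ0 : 0 ≤ sInf S := le_csInf hSne fun y hy => (hSpos y hy).le
  -- any real strictly bigger than sInf S belongs to S
  have hgt : ∀ y : ℝ, sInf S < y → y ∈ S := by
    intro y hy
    obtain ⟨y', hy', hy'y⟩ := exists_lt_of_csInf_lt hSne hy
    exact hSupper y' hy' y hy'y.le
  show sInf T = Real.log (sInf S)
  rcases eq_or_lt_of_le hQ0 with hQ | hQ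
  · -- sInf S = 0 : both sides are 0 by junk-value conventions
    rw [← hQ, Real.log_zero]
    have : ¬ BddBelow T := by
      rintro ⟨m, hm⟩
      have : m - 1 ∈ T := (hTS _).2 (hgt _ (by rw [← hQ]; exact Real.exp_pos _))
      linarith [hm this]
    exact Real.sInf_of_not_bddBelow this
  · -- sInf S > 0
    have hTne : T.Nonempty := by
      obtain ⟨y, hy⟩ := hSne
      exact ⟨Real.log y, (hTS _).2 (by rwa [Real.exp_log (hSpos y hy)])⟩
    have hTbdd : BddBelow T := by
      refine ⟨Real.log (sInf S), fun x hx => ?_⟩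
      have : sInf S ≤ Real.exp x := csInf_le hSbdd ((hTS x).1 hx)
      exact (Real.log_le_iff_le_exp hQ).2 this
    apply le_antisymm
    · apply le_of_forall_pos_le_add
      intro ε hε
      have hmem : Real.log (sInf S) + ε ∈ T := by
        apply (hTS _).2
        apply hgt
        calc sInf S = Real.exp (Real.log (sInf S)) := (Real.exp_log hQ).symm
        _ < Real.exp (Real.log (sInf S) + ε) := Real.exp_lt_exp.2 (by linarith)
      exact csInf_le hTbdd hmem
    · refine le_csInf hTne fun x hx => ?_
      exact (Real.log_le_iff_le_exp hQ).2 (csInf_le hSbdd ((hTS x).1 hx))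

theorem stmt0 {Ω : Type*} [MeasurableSpace Ω] (μ : Measure Ω) [IsProbabilityMeasure μ]
    (Y₁ Y₂ : Ω → ℝ) (hY₁ : ∀ᵐ ω ∂μ, 0 < Y₁ ω) (hY₂ : ∀ᵐ ω ∂μ, 0 < Y₂ ω)
    (b : ℝ) (hb : 0 < b) (p : ℝ) (hp : p ∈ Set.Ioo (0 : ℝ) 1)
    (R : Ω → ℝ) (hR : R = fun ω => Y₂ ω / (Y₁ ω) ^ b)
    (Z : Ω → EuclideanSpace ℝ (Fin 2))
    (hZ : Z = fun ω => WithLp.toLp 2 ![Real.log (Y₁ ω), Real.log (Y₂ ω)]) :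
    dqe μ Z p ⊆
      {z : EuclideanSpace ℝ (Fin 2) | b * z 0 + Real.log (quantileFn μ R p) ≤ z 1} := by
  intro z hz
  set c : ℝ := Real.sqrt (1 + b ^ 2) with hc
  have hc0 : 0 < c := Real.sqrt_pos.2 (by positivity)
  have hc2 : c ^ 2 = 1 + b ^ 2 := Real.sq_sqrt (by positivity)
  set d : EuclideanSpace ℝ (Fin 2) := WithLp.toLp 2 ![-b / c, 1 / c] with hd
  have hd0 : d 0 = -b / c := rfl
  have hd1 : d 1 = 1 / c := rfl
  have hdnorm : ‖d‖ = 1 := by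
    rw [EuclideanSpace.norm_eq]
    rw [Fin.sum_univ_two, hd0, hd1]
    rw [Real.norm_eq_abs, Real.norm_eq_abs, sq_abs, sq_abs]
    have : (-b / c) ^ 2 + (1 / c) ^ 2 = 1 := by
      field_simp
      linarith [hc2]
    rw [this, Real.sqrt_one]
  have hinner : ∀ w : EuclideanSpace ℝ (Fin 2),
      (inner ℝ d w : ℝ) = (-b / c) * w 0 + (1 / c) * w 1 := by
    intro w
    simp [PiLp.inner_apply, RCLike.inner_apply, Fin.sum_univ_two, hd0, hd1, mul_comm]
  -- a.e. equality of the projected variable with log R / c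
  have hae : (fun ω => (inner ℝ d (Z ω) : ℝ)) =ᵐ[μ] fun ω => Real.log (R ω) / c := by
    filter_upwards [hY₁, hY₂] with ω h1 h2
    have hlogR : Real.log (R ω) = Real.log (Y₂ ω) - b * Real.log (Y₁ ω) := by
      rw [hR]
      rw [Real.log_div h2.ne' (Real.rpow_pos_of_pos h1 b).ne', Real.log_rpow h1]
    rw [hinner, hZ]
    simp only [PiLp.toLp_apply, Matrix.cons_val_zero, Matrix.cons_val_one, Matrix.head_cons]
    rw [hlogR]
    ring
  -- the quantile of the projection equals log Q_R / c
  have hRpos : ∀ᵐ ω ∂μ, 0 < R ω := by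
    filter_upwards [hY₁, hY₂] with ω h1 h2
    rw [hR]
    exact div_pos h2 (Real.rpow_pos_of_pos h1 b)
  have hq : quantileFn μ (fun ω => (inner ℝ d (Z ω) : ℝ)) p
      = Real.log (quantileFn μ R p) / c := by
    rw [quantileFn_congr hae, quantileFn_div μ _ hc0, quantileFn_log μ hRpos hp]
  -- use the half-space for direction d
  have hmem := Set.mem_iInter₂.1 hz d hdnorm
  rw [Set.mem_setOf_eq, hq, hinner] at hmem
  rw [Set.mem_setOf_eq]
  rw [div_le_iff₀ hc0] at hmem
  have hexpand : (-b / c * z 0 + 1 / c * z 1) * c = -b * z 0 + z 1 := by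
    field_simp
  rw [hexpand] at hmem
  linarith
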